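/- Consider the generic asynchronous Q-learning iteration with adaptive stepsizes: given sequences (s_k, a_k)_{k≥1} in S×A, (s'_k)_{k≥1} in S, shifts (c_k)_{k≥1} in ℝ, constants α > 0 and h > 0 with α ≤ 1 + h, reward |R(s,a)| ≤ 1 for all (s,a), and an initial Q_1 : S×A → ℝ, define N_k(s,a) = Σ_{i=1}^k 1{(s_i,a_i)=(s,a)} and Q_{k+1}(s,a) = Q_k(s,a) + (α/(N_k(s,a)+h))·1{(s,a)=(s_k,a_k)}·(R(s_k,a_k) + max_{a'∈A} Q_k(s'_k,a') − Q_k(s_k,a_k)) + c_k. Then for every k ≥ 1, p_span(Q_k) ≤ p_span(Q_1) + α·|S|·|A|·log((⌈(k−1)/(|S|·|A|)⌉ + h)/h). -/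

import Mathlib

/-- The span seminorm of a vector over a finite nonempty index set:
`p_span(x) = (max_i x_i - min_i x_i) / 2`. -/
noncomputable def pspan {I : Type*} [Fintype I] [Nonempty I] (x : I → ℝ) : ℝ :=
  ((⨆ i, x i) - ⨅ i, x i) / 2

/-- The number of visits `N_k(s,a) = Σ_{i=1}^k 1{(s_i,a_i) = (s,a)}` of a state-action
trajectory to the pair `(s,a)` during the first `k` iterations. -/
def visits {S A : Type*} [DecidableEq S] [DecidableEq A]
    (sa : ℕ → S × A) (k : ℕ) (q : S × A) : ℕ :=
  ((Finset.Icc 1 k).filter (fun i => sa i = q)).card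

section helpers
variable {S A : Type*} [DecidableEq S] [DecidableEq A] (sa : ℕ → S × A)

private lemma visits_self_pos {i : ℕ} (hi : 1 ≤ i) : 1 ≤ visits sa i (sa i) := by
  have : i ∈ (Finset.Icc 1 i).filter (fun j => sa j = sa i) := by
    simp [Finset.mem_Icc, hi]
  exact Finset.card_pos.mpr ⟨i, this⟩

private lemma visits_mono {i K : ℕ} (hiK : i ≤ K) (q : S × A) :
    visits sa i q ≤ visits sa K q :=
  Finset.card_le_card (Finset.filter_subset_filter _ (Finset.Icc_subset_Icc_right hiK))

private lemma visits_strict {i j : ℕ} (hij : i < j) (hq : sa i = sa j) :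
    visits sa i (sa i) < visits sa j (sa j) := by
  rw [hq]
  apply Finset.card_lt_card
  rw [Finset.ssubset_iff_of_subset
    (Finset.filter_subset_filter _ (Finset.Icc_subset_Icc_right hij.le))]
  refine ⟨j, by simp [Finset.mem_Icc, hij, Nat.one_le_iff_ne_zero]; omega, ?_⟩
  simp [Finset.mem_Icc]
  omega

end helpers

private lemma sum_inv_le_log (h : ℝ) (hh : 0 < h) (m : ℕ) :
    ∑ n ∈ Finset.Icc 1 m, (1 : ℝ) / ((n : ℝ) + h) ≤ Real.log ((m : ℝ) + h) - Real.log h := by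
  induction m with
  | zero => simp
  | succ m ih =>
    rw [Finset.sum_Icc_succ_top (by omega)]
    have h1 : (0:ℝ) < (m:ℝ) + h := by positivity
    have h2 : (0:ℝ) < (m:ℝ) + 1 + h := by positivity
    have key : (1:ℝ) / ((m:ℝ) + 1 + h) ≤ Real.log ((m:ℝ) + 1 + h) - Real.log ((m:ℝ) + h) := by
      have hl := Real.log_le_sub_one_of_pos (x := ((m:ℝ)+h)/((m:ℝ)+1+h)) (by positivity)
      rw [Real.log_div (ne_of_gt h1) (ne_of_gt h2)] at hl
      have he : ((m:ℝ)+h)/((m:ℝ)+1+h) - 1 = -(1/((m:ℝ)+1+h)) := by field_simp; ring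
      rw [he] at hl
      linarith
    push_cast
    push_cast at ih
    linarith

private lemma span_step {S A : Type*} [Fintype S] [Fintype A] [Nonempty S] [Nonempty A]
    [DecidableEq S] [DecidableEq A]
    (Qk Qk1 : S × A → ℝ) (p : S × A) (r T β ck : ℝ)
    (hr : |r| ≤ 1) (hβ0 : 0 ≤ β) (hβ1 : β ≤ 1)
    (hTl : (⨅ q, Qk q) ≤ T) (hTu : T ≤ ⨆ q, Qk q)
    (hupd : ∀ q, Qk1 q = Qk q + β * (if q = p then (1:ℝ) else 0) * (r + T - Qk p) + ck) :
    pspan Qk1 ≤ pspan Qk + β := by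
  have hbb : ∀ q, (⨅ q', Qk q') ≤ Qk q := fun q => ciInf_le (Finite.bddBelow_range _) q
  have hub : ∀ q, Qk q ≤ ⨆ q', Qk q' := fun q => le_ciSup (Finite.bddAbove_range _) q
  have hr1 := (abs_le.mp hr).1
  have hr2 := (abs_le.mp hr).2
  have hupper : ∀ q, Qk1 q ≤ (⨆ q', Qk q') + β + ck := by
    intro q; rw [hupd q]
    by_cases hq : q = p
    · subst hq
      simp only [eq_self_iff_true, if_true, mul_one]
      nlinarith [hub q, mul_nonneg hβ0 (by linarith [hub q] : (0:ℝ) ≤ 1 + (⨆ q', Qk q') - (r + T)),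
        mul_nonneg (by linarith : (0:ℝ) ≤ 1 - β) (by linarith [hub q] : (0:ℝ) ≤ (⨆ q', Qk q') - Qk q)]
    · simp only [if_neg hq, mul_zero, zero_mul]
      linarith [hub q]
  have hlower : ∀ q, (⨅ q', Qk q') - β + ck ≤ Qk1 q := by
    intro q; rw [hupd q]
    by_cases hq : q = p
    · subst hq
      simp only [eq_self_iff_true, if_true, mul_one]
      nlinarith [hbb q, mul_nonneg hβ0 (by linarith [hbb q] : (0:ℝ) ≤ (r + T) - ((⨅ q', Qk q') - 1)),
        mul_nonneg (by linarith : (0:ℝ) ≤ 1 - β) (by linarith [hbb q] : (0:ℝ) ≤ Qk q - ⨅ q', Qk q')]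
    · simp only [if_neg hq, mul_zero, zero_mul]
      linarith [hbb q]
  have h1 : (⨆ q, Qk1 q) ≤ (⨆ q', Qk q') + β + ck := ciSup_le hupper
  have h2 : (⨅ q', Qk q') - β + ck ≤ ⨅ q, Qk1 q := le_ciInf hlower
  unfold pspan
  linarith

/-- Logarithmic almost-sure growth bound for asynchronous Q-learning with adaptive
stepsizes `α_k(s,a) = α/(N_k(s,a) + h)`:
`p_span(Q_k) ≤ p_span(Q_1) + α·|S|·|A|·log((⌈(k-1)/(|S||A|)⌉ + h)/h)`. -/
theorem qlearning_log_growth {S A : Type*} [Fintype S] [Fintype A] [Nonempty S] [Nonempty A]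
    [DecidableEq S] [DecidableEq A]
    (R : S × A → ℝ) (hR : ∀ sa, |R sa| ≤ 1)
    (sa : ℕ → S × A) (s' : ℕ → S) (c : ℕ → ℝ)
    (α h : ℝ) (hα : 0 < α) (hh : 0 < h) (hαh : α ≤ 1 + h)
    (Q : ℕ → S × A → ℝ)
    (hstep : ∀ k, 1 ≤ k → ∀ q : S × A,
      Q (k + 1) q = Q k q
        + (α / ((visits sa k q : ℝ) + h)) * (if q = sa k then (1 : ℝ) else 0) *
            (R (sa k) + (⨆ a' : A, Q k (s' k, a')) - Q k (sa k))
        + c k) :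
    ∀ k, 1 ≤ k →
      pspan (Q k) ≤ pspan (Q 1)
        + α * (Fintype.card S : ℝ) * (Fintype.card A : ℝ) *
            Real.log
              (((((⌈((k : ℝ) - 1) / ((Fintype.card S : ℝ) * (Fintype.card A : ℝ))⌉ : ℤ) : ℝ))
                  + h) / h) := by
  intro k hk
  obtain ⟨K, rfl⟩ : ∃ K, k = K + 1 := ⟨k - 1, by omega⟩
  set n : ℕ := Fintype.card (S × A) with hn
  have hn0 : 0 < n := Fintype.card_pos
  have hnR : (0:ℝ) < (n:ℝ) := by exact_mod_cast hn0
  -- per-step bound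
  have step : ∀ i, 1 ≤ i →
      pspan (Q (i+1)) ≤ pspan (Q i) + α / ((visits sa i (sa i) : ℝ) + h) := by
    intro i hi
    have hvis : 1 ≤ visits sa i (sa i) := visits_self_pos sa hi
    have hvisR : (1:ℝ) ≤ (visits sa i (sa i) : ℝ) := by exact_mod_cast hvis
    have hden : (0:ℝ) < (visits sa i (sa i) : ℝ) + h := by positivity
    have hβ0 : 0 ≤ α / ((visits sa i (sa i) : ℝ) + h) := by positivity
    have hβ1 : α / ((visits sa i (sa i) : ℝ) + h) ≤ 1 := by
      rw [div_le_one hden]; linarith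
    refine span_step (Q i) (Q (i+1)) (sa i) (R (sa i)) (⨆ a' : A, Q i (s' i, a'))
      (α / ((visits sa i (sa i) : ℝ) + h)) (c i) (hR _) hβ0 hβ1 ?_ ?_ ?_
    · obtain ⟨a0⟩ := (inferInstance : Nonempty A)
      calc (⨅ q, Q i q) ≤ Q i (s' i, a0) := ciInf_le (Finite.bddBelow_range _) _
        _ ≤ ⨆ a' : A, Q i (s' i, a') :=
            le_ciSup (f := fun a' : A => Q i (s' i, a')) (Finite.bddAbove_range _) a0
    · exact ciSup_le fun a' =>
        le_ciSup (f := fun q : S × A => Q i q) (Finite.bddAbove_range _) (s' i, a')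
    · intro q
      rw [hstep i hi q]
      by_cases hq : q = sa i
      · subst hq; rfl
      · simp [hq]
  -- cumulative bound
  have cum : ∀ M : ℕ, pspan (Q (M+1)) ≤ pspan (Q 1)
      + ∑ i ∈ Finset.Icc 1 M, α / ((visits sa i (sa i) : ℝ) + h) := by
    intro M
    induction M with
    | zero => simp
    | succ M ih =>
      rw [Finset.sum_Icc_succ_top (by omega)]
      have := step (M+1) (by omega)
      push_cast at this ⊢
      linarith
  -- counting: total visits
  have hcount : ∑ q : S × A, visits sa K q = K := by
    have := Finset.card_eq_sum_card_fiberwise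
      (f := sa) (s := Finset.Icc 1 K) (t := (Finset.univ : Finset (S × A)))
      (fun x _ => Finset.mem_univ _)
    simp only [Nat.card_Icc] at this
    unfold visits
    omega
  -- sum over steps bounded by sum over pairs of harmonic-type sums
  have hsum1 : ∑ i ∈ Finset.Icc 1 K, (1:ℝ) / ((visits sa i (sa i) : ℝ) + h)
      ≤ ∑ q : S × A, (Real.log ((visits sa K q : ℝ) + h) - Real.log h) := by
    set g : ℕ → (Σ _ : S × A, ℕ) := fun i => ⟨sa i, visits sa i (sa i)⟩ with hg
    set B := (Finset.univ : Finset (S × A)).sigma (fun q => Finset.Icc 1 (visits sa K q)) with hB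
    set F : (Σ _ : S × A, ℕ) → ℝ := fun x => (1:ℝ) / ((x.2 : ℝ) + h) with hF
    have hinj : ∀ i ∈ Finset.Icc 1 K, ∀ j ∈ Finset.Icc 1 K, g i = g j → i = j := by
      intro i hi j hj hij
      simp only [Finset.mem_Icc] at hi hj
      by_contra hne
      have h1 : sa i = sa j := congrArg Sigma.fst hij
      have h2 : visits sa i (sa i) = visits sa j (sa j) :=
        eq_of_heq (Sigma.mk.inj_iff.mp hij).2
      rcases Nat.lt_or_ge i j with hlt | hge
      · exact absurd h2 (Nat.ne_of_lt (visits_strict sa hlt h1))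
      · have hlt : j < i := by omega
        exact absurd h2.symm (Nat.ne_of_lt (visits_strict sa hlt h1.symm))
    have hmaps : ∀ i ∈ Finset.Icc 1 K, g i ∈ B := by
      intro i hi
      simp only [Finset.mem_Icc] at hi
      simp only [hB, Finset.mem_sigma, Finset.mem_univ, true_and, Finset.mem_Icc, g]
      exact ⟨visits_self_pos sa hi.1, visits_mono sa hi.2 _⟩
    calc ∑ i ∈ Finset.Icc 1 K, (1:ℝ) / ((visits sa i (sa i) : ℝ) + h)
        = ∑ i ∈ Finset.Icc 1 K, F (g i) := rfl
      _ = ∑ x ∈ (Finset.Icc 1 K).image g, F x := (Finset.sum_image hinj).symm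
      _ ≤ ∑ x ∈ B, F x := by
          apply Finset.sum_le_sum_of_subset_of_nonneg
          · intro x hx
            obtain ⟨i, hi, rfl⟩ := Finset.mem_image.mp hx
            exact hmaps i hi
          · intro x _ _; positivity
      _ = ∑ q : S × A, ∑ m ∈ Finset.Icc 1 (visits sa K q), (1:ℝ) / ((m:ℝ) + h) :=
          Finset.sum_sigma _ _ _
      _ ≤ ∑ q : S × A, (Real.log ((visits sa K q : ℝ) + h) - Real.log h) :=
          Finset.sum_le_sum (fun q _ => sum_inv_le_log h hh _)
  -- Jensen
  have jensen : ∑ q : S × A, Real.log ((visits sa K q : ℝ) + h)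
      ≤ (n:ℝ) * Real.log ((K:ℝ)/(n:ℝ) + h) := by
    have hJ := (strictConcaveOn_log_Ioi.concaveOn).le_map_sum
      (t := (Finset.univ : Finset (S × A))) (w := fun _ => (n:ℝ)⁻¹)
      (p := fun q => (visits sa K q : ℝ) + h)
      (fun _ _ => by positivity)
      (by simp [Finset.card_univ, ← hn, Finset.sum_const, nsmul_eq_mul])
      (fun q _ => by simp only [Set.mem_Ioi]; positivity)
    have hcast : ∑ q : S × A, (visits sa K q : ℝ) = (K:ℝ) := by
      rw [← Nat.cast_sum, hcount]
    have hsum : ∑ q : S × A, (n:ℝ)⁻¹ • ((visits sa K q : ℝ) + h) = (K:ℝ)/(n:ℝ) + h := by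
      simp only [smul_eq_mul]
      rw [← Finset.mul_sum, Finset.sum_add_distrib, hcast, Finset.sum_const,
        Finset.card_univ, ← hn, nsmul_eq_mul]
      field_simp
    rw [hsum] at hJ
    have : ∑ q : S × A, (n:ℝ)⁻¹ • Real.log ((visits sa K q : ℝ) + h)
        = (n:ℝ)⁻¹ * ∑ q : S × A, Real.log ((visits sa K q : ℝ) + h) := by
      simp only [smul_eq_mul]; rw [Finset.mul_sum]
    rw [this] at hJ
    calc ∑ q : S × A, Real.log ((visits sa K q : ℝ) + h)
        = (n:ℝ) * ((n:ℝ)⁻¹ * ∑ q : S × A, Real.log ((visits sa K q : ℝ) + h)) := by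
          field_simp
      _ ≤ (n:ℝ) * Real.log ((K:ℝ)/(n:ℝ) + h) := by
          exact mul_le_mul_of_nonneg_left hJ (le_of_lt hnR)
  -- ceiling
  have hceil : Real.log ((K:ℝ)/(n:ℝ) + h)
      ≤ Real.log ((((⌈((K:ℝ))/(n:ℝ)⌉ : ℤ) : ℝ)) + h) := by
    apply Real.log_le_log (by positivity)
    have := Int.le_ceil ((K:ℝ)/(n:ℝ))
    linarith
  -- assemble
  have hsumfinal : ∑ i ∈ Finset.Icc 1 K, α / ((visits sa i (sa i) : ℝ) + h)
      ≤ α * ((n:ℝ) * (Real.log ((((⌈((K:ℝ))/(n:ℝ)⌉ : ℤ) : ℝ)) + h) - Real.log h)) := by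
    have e1 : ∑ i ∈ Finset.Icc 1 K, α / ((visits sa i (sa i) : ℝ) + h)
        = α * ∑ i ∈ Finset.Icc 1 K, (1:ℝ) / ((visits sa i (sa i) : ℝ) + h) := by
      rw [Finset.mul_sum]; congr 1; ext i; ring
    rw [e1]
    apply mul_le_mul_of_nonneg_left _ (le_of_lt hα)
    calc ∑ i ∈ Finset.Icc 1 K, (1:ℝ) / ((visits sa i (sa i) : ℝ) + h)
        ≤ ∑ q : S × A, (Real.log ((visits sa K q : ℝ) + h) - Real.log h) := hsum1
      _ = (∑ q : S × A, Real.log ((visits sa K q : ℝ) + h)) - (n:ℝ) * Real.log h := by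
          rw [Finset.sum_sub_distrib, Finset.sum_const, Finset.card_univ, ← hn, nsmul_eq_mul]
      _ ≤ (n:ℝ) * Real.log ((K:ℝ)/(n:ℝ) + h) - (n:ℝ) * Real.log h := by linarith [jensen]
      _ ≤ (n:ℝ) * (Real.log ((((⌈((K:ℝ))/(n:ℝ)⌉ : ℤ) : ℝ)) + h) - Real.log h) := by
          have := mul_le_mul_of_nonneg_left hceil (le_of_lt hnR)
          ring_nf
          ring_nf at this
          linarith
  -- final rewriting
  have hcardeq : ((Fintype.card S : ℝ)) * (Fintype.card A : ℝ) = (n:ℝ) := by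
    rw [hn, Fintype.card_prod]; push_cast; ring
  have hK1 : ((K:ℝ) + 1 - 1) = (K:ℝ) := by ring
  have hceilpos : (0:ℝ) < (((⌈((K:ℝ))/(n:ℝ)⌉ : ℤ) : ℝ)) + h := by
    have h0 : (0:ℝ) ≤ (K:ℝ)/(n:ℝ) := by positivity
    have := Int.le_ceil ((K:ℝ)/(n:ℝ))
    linarith
  have hlogdiv : Real.log (((((⌈((K:ℝ))/(n:ℝ)⌉ : ℤ) : ℝ)) + h) / h)
      = Real.log ((((⌈((K:ℝ))/(n:ℝ)⌉ : ℤ) : ℝ)) + h) - Real.log h :=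
    Real.log_div (ne_of_gt hceilpos) (ne_of_gt hh)
  calc pspan (Q (K+1)) ≤ pspan (Q 1)
        + ∑ i ∈ Finset.Icc 1 K, α / ((visits sa i (sa i) : ℝ) + h) := cum K
    _ ≤ pspan (Q 1)
        + α * ((n:ℝ) * (Real.log ((((⌈((K:ℝ))/(n:ℝ)⌉ : ℤ) : ℝ)) + h) - Real.log h)) := by
          linarith [hsumfinal]
    _ = pspan (Q 1)
        + α * (Fintype.card S : ℝ) * (Fintype.card A : ℝ) *
            Real.log
              (((((⌈(((K+1 : ℕ) : ℝ) - 1) / ((Fintype.card S : ℝ) * (Fintype.card A : ℝ))⌉ : ℤ) : ℝ))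
                  + h) / h) := by
          have harg : (((K+1:ℕ):ℝ) - 1) / ((Fintype.card S : ℝ) * (Fintype.card A : ℝ))
              = (K:ℝ)/(n:ℝ) := by
            rw [hcardeq]; push_cast; ring
          rw [harg, hlogdiv, ← hcardeq]
          ring
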